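/- Let λ, μ > 0 with ρ = λ/μ < 1, and let i, j ≥ 0 be integers. Then p_{ij}(0) equals 1 if i = j and equals 0 if i ≠ j; that is, (2/π)·ρ^{(j−i)/2}·∫₀^π (1/γ(y))·a_i(y)·a_j(y) dy + (1−ρ)·ρ^j equals 1 when i = j and 0 when i ≠ j. -/

import Mathlib

open Real MeasureTheory Set Filter

/-- γ(y) = 1 + ρ − 2√ρ·cos(y). -/
noncomputable def gam (ρ y : ℝ) : ℝ := 1 + ρ - 2 * Real.sqrt ρ * Real.cos y

/-- a_k(y) = sin(k·y) − √ρ·sin((k+1)·y). -/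
noncomputable def aco (ρ : ℝ) (k : ℕ) (y : ℝ) : ℝ :=
  Real.sin ((k : ℝ) * y) - Real.sqrt ρ * Real.sin (((k : ℝ) + 1) * y)

/-- Transient expected queue length of an M/M/1 queue started with `i` customers. -/
noncomputable def EL (lam mu : ℝ) (i : ℕ) (t : ℝ) : ℝ :=
  (2 / Real.pi) * (lam / mu) ^ ((1 - (i : ℝ)) / 2) *
    (∫ y in (0 : ℝ)..Real.pi,
      Real.exp (-(mu * t * gam (lam / mu) y)) / (gam (lam / mu) y) ^ 2 *
        (aco (lam / mu) i y * Real.sin y)) +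
  (lam / mu) / (1 - lam / mu)

/-- Transient probability that an M/M/1 queue started with `i` customers has `j` at time `t`. -/
noncomputable def pq (lam mu : ℝ) (i j : ℕ) (t : ℝ) : ℝ :=
  (2 / Real.pi) * (lam / mu) ^ (((j : ℝ) - (i : ℝ)) / 2) *
    (∫ y in (0 : ℝ)..Real.pi,
      Real.exp (-(mu * t * gam (lam / mu) y)) / gam (lam / mu) y *
        (aco (lam / mu) i y * aco (lam / mu) j y)) +
  (1 - lam / mu) * (lam / mu) ^ j

/-- Erlang(n) density with rate `mu`: f_n(t) = μⁿ t^{n−1} e^{−μt}/(n−1)!. -/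
noncomputable def erl (mu : ℝ) (n : ℕ) (t : ℝ) : ℝ :=
  mu ^ n * t ^ (n - 1) * Real.exp (-(mu * t)) / (Nat.factorial (n - 1) : ℝ)

/-- Expected total time to complete queue with `a` customers first, then queue with `b`. -/
noncomputable def ETT (lam mu : ℝ) (a b : ℕ) : ℝ :=
  ((a : ℝ) + 2) / mu + (1 / mu) * ∫ t in Set.Ioi (0 : ℝ), erl mu (a + 1) t * EL lam mu b t

noncomputable def gm (r y : ℝ) : ℝ := 1 + r^2 - 2*r*Real.cos y

lemma gm_pos {r : ℝ} (hr1 : r < 1) (hr0 : 0 < r) (y : ℝ) : 0 < gm r y := by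
  have h1 := Real.cos_le_one y
  unfold gm; nlinarith [sq_nonneg (1 - r)]

lemma gm_cont (r : ℝ) : Continuous (gm r) := by
  unfold gm; continuity

lemma hasDerivF {r : ℝ} (hr1 : r < 1) (hr0 : 0 < r) (y : ℝ) :
    HasDerivAt (fun y => y + 2 * Real.arctan (r * Real.sin y / (1 - r * Real.cos y)))
      ((1 - r^2) / gm r y) y := by
  have hv : 0 < 1 - r * Real.cos y := by nlinarith [Real.cos_le_one y]
  have hv' : (1 - r * Real.cos y) ≠ 0 := ne_of_gt hv
  have hγ : gm r y ≠ 0 := ne_of_gt (gm_pos hr1 hr0 y)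
  have hg : HasDerivAt (fun y => r * Real.sin y / (1 - r * Real.cos y))
      (((r * Real.cos y) * (1 - r * Real.cos y) - (r * Real.sin y) * (r * Real.sin y)) / (1 - r * Real.cos y)^2) y := by
    have h1 : HasDerivAt (fun y => r * Real.sin y) (r * Real.cos y) y :=
      (Real.hasDerivAt_sin y).const_mul r
    have h2 : HasDerivAt (fun y => 1 - r * Real.cos y) (r * Real.sin y) y := by
      have := ((Real.hasDerivAt_cos y).const_mul r).const_sub 1
      simpa using this
    exact h1.div h2 hv'
  have h : HasDerivAt (fun y => y + 2 * Real.arctan (r * Real.sin y / (1 - r * Real.cos y)))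
      (1 + 2 * (1 / (1 + (r * Real.sin y / (1 - r * Real.cos y))^2) *
        (((r * Real.cos y) * (1 - r * Real.cos y) - (r * Real.sin y) * (r * Real.sin y)) / (1 - r * Real.cos y)^2))) y :=
    (hasDerivAt_id y).add (hg.arctan.const_mul 2)
  convert h using 1
  have h1 : 1 + (r * Real.sin y / (1 - r * Real.cos y))^2 = gm r y / (1 - r * Real.cos y)^2 := by
    field_simp
    unfold gm
    linear_combination (r^2) * Real.sin_sq_add_cos_sq y
  have hN : (r * Real.cos y) * (1 - r * Real.cos y) - (r * Real.sin y) * (r * Real.sin y)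
      = r * Real.cos y - r^2 := by
    linear_combination (-(r^2)) * Real.sin_sq_add_cos_sq y
  rw [h1, hN, one_div_div]
  have : (1 - r * Real.cos y)^2 / gm r y * ((r * Real.cos y - r^2) / (1 - r * Real.cos y)^2)
      = (r * Real.cos y - r^2) / gm r y := by
    field_simp
  rw [this]
  have hgm : gm r y = 1 + r^2 - 2*r*Real.cos y := rfl
  field_simp
  rw [hgm]
  ring

noncomputable def Jz (r c : ℝ) : ℝ := ∫ y in (0:ℝ)..Real.pi, Real.cos (c*y) / gm r y

lemma contq {r : ℝ} (hr1 : r < 1) (hr0 : 0 < r) (c : ℝ) :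
    Continuous (fun y => Real.cos (c*y) / gm r y) :=
  (Real.continuous_cos.comp (continuous_const.mul continuous_id)).div (gm_cont r)
    (fun y => ne_of_gt (gm_pos hr1 hr0 y))

lemma intq {r : ℝ} (hr1 : r < 1) (hr0 : 0 < r) (c a b : ℝ) :
    IntervalIntegrable (fun y => Real.cos (c*y) / gm r y) MeasureTheory.volume a b :=
  (contq hr1 hr0 c).intervalIntegrable a b

lemma J0 {r : ℝ} (hr1 : r < 1) (hr0 : 0 < r) : Jz r 0 = Real.pi / (1 - r^2) := by
  have hr2 : (1:ℝ) - r^2 ≠ 0 := by nlinarith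
  have hFTC : (∫ y in (0:ℝ)..Real.pi, (1 - r^2) / gm r y) = Real.pi := by
    rw [intervalIntegral.integral_eq_sub_of_hasDerivAt
      (f := fun y => y + 2 * Real.arctan (r * Real.sin y / (1 - r * Real.cos y)))
      (fun y _ => hasDerivF hr1 hr0 y)
      (((continuous_const.div (gm_cont r) (fun y => ne_of_gt (gm_pos hr1 hr0 y))).intervalIntegrable _ _))]
    simp [Real.sin_pi]
  have : Jz r 0 = (1/(1 - r^2)) * ∫ y in (0:ℝ)..Real.pi, (1 - r^2) / gm r y := by
    rw [← intervalIntegral.integral_const_mul]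
    unfold Jz
    congr 1; funext y
    rw [zero_mul, Real.cos_zero]
    field_simp
  rw [this, hFTC]; field_simp

lemma intCosNat (c : ℝ) (hc : c ≠ 0) :
    (∫ y in (0:ℝ)..Real.pi, Real.cos (c*y)) = Real.sin (c*Real.pi) / c := by
  have h : ∀ y ∈ Set.uIcc (0:ℝ) Real.pi, HasDerivAt (fun y => Real.sin (c*y) / c) (Real.cos (c*y)) y := by
    intro y _
    have h1 : HasDerivAt (fun y : ℝ => c*y) c y := by
      simpa using (hasDerivAt_id y).const_mul c
    have := ((Real.hasDerivAt_sin (c*y)).comp y h1).div_const c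
    simpa [mul_comm, mul_div_assoc, mul_div_cancel_left₀ _ hc] using this
  rw [intervalIntegral.integral_eq_sub_of_hasDerivAt h
    ((Real.continuous_cos.comp (continuous_const.mul continuous_id)).intervalIntegrable _ _)]
  simp

lemma intCosNat' (m : ℕ) : (∫ y in (0:ℝ)..Real.pi, Real.cos (((m:ℝ)+1)*y)) = 0 := by
  have hc : ((m:ℝ)+1) ≠ 0 := by positivity
  rw [intCosNat _ hc]
  have : ((m:ℝ)+1) * Real.pi = ((m+1 : ℕ) : ℝ) * Real.pi := by push_cast; ring
  rw [this, Real.sin_nat_mul_pi]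
  simp

lemma intcos (c a b : ℝ) : IntervalIntegrable (fun y => Real.cos (c*y)) MeasureTheory.volume a b := by
  apply Continuous.intervalIntegrable; continuity

lemma J1 {r : ℝ} (hr1 : r < 1) (hr0 : 0 < r) : Jz r 1 = Real.pi * r / (1 - r^2) := by
  have hr2 : (1:ℝ) - r^2 ≠ 0 := by nlinarith
  have hptw : ∀ y : ℝ, Real.cos (1*y) / gm r y
      = (1+r^2)/(2*r) * (Real.cos (0*y) / gm r y) - (1/(2*r)) := by
    intro y
    have hγ : gm r y ≠ 0 := ne_of_gt (gm_pos hr1 hr0 y)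
    have hgm : gm r y = 1 + r^2 - 2*r*Real.cos y := rfl
    rw [one_mul, zero_mul, Real.cos_zero]
    field_simp
    rw [hgm]
    ring
  have : Jz r 1 = ∫ y in (0:ℝ)..Real.pi,
      ((1+r^2)/(2*r) * (Real.cos (0*y) / gm r y) - (1/(2*r))) := by
    unfold Jz; congr 1; funext y; exact hptw y
  rw [this, intervalIntegral.integral_sub (((intq hr1 hr0 0 0 Real.pi).const_mul _))
    (intervalIntegrable_const), intervalIntegral.integral_const_mul, intervalIntegral.integral_const]
  have h0 := J0 hr1 hr0
  unfold Jz at h0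
  rw [h0]
  simp only [smul_eq_mul, sub_zero]
  field_simp
  ring

lemma Jrec {r : ℝ} (hr1 : r < 1) (hr0 : 0 < r) (m : ℕ) :
    Jz r ((m:ℝ)+2) = (1+r^2)/r * Jz r ((m:ℝ)+1) - Jz r (m:ℝ) := by
  have hptw : ∀ y : ℝ, Real.cos (((m:ℝ)+2)*y) / gm r y
      = (1+r^2)/r * (Real.cos (((m:ℝ)+1)*y) / gm r y)
        - (1/r) * Real.cos (((m:ℝ)+1)*y) - Real.cos ((m:ℝ)*y) / gm r y := by
    intro y
    have hγ : gm r y ≠ 0 := ne_of_gt (gm_pos hr1 hr0 y)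
    have hgm : gm r y = 1 + r^2 - 2*r*Real.cos y := rfl
    have e1 : ((m:ℝ)+2)*y = ((m:ℝ)+1)*y + y := by ring
    have e2 : (m:ℝ)*y = ((m:ℝ)+1)*y - y := by ring
    rw [e1, e2, Real.cos_add, Real.cos_sub]
    field_simp
    rw [hgm]
    ring
  have : Jz r ((m:ℝ)+2) = ∫ y in (0:ℝ)..Real.pi,
      ((1+r^2)/r * (Real.cos (((m:ℝ)+1)*y) / gm r y)
        - (1/r) * Real.cos (((m:ℝ)+1)*y) - Real.cos ((m:ℝ)*y) / gm r y) := by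
    unfold Jz; congr 1; funext y; exact hptw y
  rw [this]
  rw [intervalIntegral.integral_sub ((((intq hr1 hr0 ((m:ℝ)+1) 0 Real.pi).const_mul _)).sub
      ((intcos ((m:ℝ)+1) 0 Real.pi).const_mul _))
    (intq hr1 hr0 (m:ℝ) 0 Real.pi),
    intervalIntegral.integral_sub ((intq hr1 hr0 ((m:ℝ)+1) 0 Real.pi).const_mul _)
      ((intcos ((m:ℝ)+1) 0 Real.pi).const_mul _),
    intervalIntegral.integral_const_mul, intervalIntegral.integral_const_mul, intCosNat' m]
  unfold Jz
  ring

lemma Jnat {r : ℝ} (hr1 : r < 1) (hr0 : 0 < r) (m : ℕ) :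
    Jz r (m:ℝ) = Real.pi * r^m / (1 - r^2) := by
  have hr2 : (1:ℝ) - r^2 ≠ 0 := by nlinarith
  have H : ∀ n : ℕ, Jz r (n:ℝ) = Real.pi * r^n / (1 - r^2)
      ∧ Jz r ((n:ℝ)+1) = Real.pi * r^(n+1) / (1 - r^2) := by
    intro n
    induction n with
    | zero =>
      constructor
      · simpa using J0 hr1 hr0
      · simpa using J1 hr1 hr0
    | succ k ih =>
      refine ⟨by simpa [Nat.cast_succ] using ih.2, ?_⟩
      have hrec := Jrec hr1 hr0 k
      have e : ((k:ℝ)+1)+1 = (k:ℝ)+2 := by ring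
      rw [Nat.cast_succ, e, hrec, ih.1, ih.2]
      field_simp
      ring
  exact (H m).1

lemma Jz_neg (r c : ℝ) : Jz r (-c) = Jz r c := by
  unfold Jz; congr 1; funext y; rw [neg_mul, Real.cos_neg]

lemma key {r : ℝ} (hr1 : r < 1) (hr0 : 0 < r) (i j : ℕ) :
    (∫ y in (0:ℝ)..Real.pi,
      (Real.sin ((i:ℝ)*y) - r*Real.sin (((i:ℝ)+1)*y)) *
        (Real.sin ((j:ℝ)*y) - r*Real.sin (((j:ℝ)+1)*y)) / gm r y)
    = (1+r^2)/2 * Jz r ((j:ℝ)-i) - (r/2) * Jz r ((j:ℝ)-i+1) - (r/2) * Jz r ((j:ℝ)-i-1)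
      - (1/2) * Jz r ((i:ℝ)+j) + r * Jz r ((i:ℝ)+j+1) - (r^2/2) * Jz r ((i:ℝ)+j+2) := by
  have hptw : ∀ y : ℝ,
      (Real.sin ((i:ℝ)*y) - r*Real.sin (((i:ℝ)+1)*y)) *
        (Real.sin ((j:ℝ)*y) - r*Real.sin (((j:ℝ)+1)*y)) / gm r y
      = (1+r^2)/2 * (Real.cos (((j:ℝ)-i)*y) / gm r y)
        - (r/2) * (Real.cos (((j:ℝ)-i+1)*y) / gm r y)
        - (r/2) * (Real.cos (((j:ℝ)-i-1)*y) / gm r y)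
        - (1/2) * (Real.cos (((i:ℝ)+j)*y) / gm r y)
        + r * (Real.cos (((i:ℝ)+j+1)*y) / gm r y)
        - (r^2/2) * (Real.cos (((i:ℝ)+j+2)*y) / gm r y) := by
    intro y
    have hγ : gm r y ≠ 0 := ne_of_gt (gm_pos hr1 hr0 y)
    have eA1 : ((i:ℝ)+1)*y = (i:ℝ)*y + y := by ring
    have eB1 : ((j:ℝ)+1)*y = (j:ℝ)*y + y := by ring
    have e1 : ((j:ℝ)-i)*y = (j:ℝ)*y - (i:ℝ)*y := by ring
    have e2 : ((j:ℝ)-i+1)*y = ((j:ℝ)*y - (i:ℝ)*y) + y := by ring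
    have e3 : ((j:ℝ)-i-1)*y = ((j:ℝ)*y - (i:ℝ)*y) - y := by ring
    have e4 : ((i:ℝ)+j)*y = (i:ℝ)*y + (j:ℝ)*y := by ring
    have e5 : ((i:ℝ)+j+1)*y = ((i:ℝ)*y + (j:ℝ)*y) + y := by ring
    have e6 : ((i:ℝ)+j+2)*y = (((i:ℝ)*y + (j:ℝ)*y) + y) + y := by ring
    rw [eA1, eB1, e1, e2, e3, e4, e5, e6]
    simp only [Real.cos_add, Real.cos_sub, Real.sin_add, Real.sin_sub]
    field_simp
    ring_nf
    simp only [Real.sin_sq]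
    ring
  have hI : (∫ y in (0:ℝ)..Real.pi,
      (Real.sin ((i:ℝ)*y) - r*Real.sin (((i:ℝ)+1)*y)) *
        (Real.sin ((j:ℝ)*y) - r*Real.sin (((j:ℝ)+1)*y)) / gm r y)
      = ∫ y in (0:ℝ)..Real.pi,
      ((1+r^2)/2 * (Real.cos (((j:ℝ)-i)*y) / gm r y)
        - (r/2) * (Real.cos (((j:ℝ)-i+1)*y) / gm r y)
        - (r/2) * (Real.cos (((j:ℝ)-i-1)*y) / gm r y)
        - (1/2) * (Real.cos (((i:ℝ)+j)*y) / gm r y)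
        + r * (Real.cos (((i:ℝ)+j+1)*y) / gm r y)
        - (r^2/2) * (Real.cos (((i:ℝ)+j+2)*y) / gm r y)) := by
    congr 1; funext y; exact hptw y
  rw [hI]
  have i1 := (intq hr1 hr0 ((j:ℝ)-i) 0 Real.pi).const_mul ((1+r^2)/2)
  have i2 := (intq hr1 hr0 ((j:ℝ)-i+1) 0 Real.pi).const_mul (r/2)
  have i3 := (intq hr1 hr0 ((j:ℝ)-i-1) 0 Real.pi).const_mul (r/2)
  have i4 := (intq hr1 hr0 ((i:ℝ)+j) 0 Real.pi).const_mul (1/2 : ℝ)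
  have i5 := (intq hr1 hr0 ((i:ℝ)+j+1) 0 Real.pi).const_mul r
  have i6 := (intq hr1 hr0 ((i:ℝ)+j+2) 0 Real.pi).const_mul (r^2/2)
  rw [intervalIntegral.integral_sub ((((i1.sub i2).sub i3).sub i4).add i5) i6,
      intervalIntegral.integral_add (((i1.sub i2).sub i3).sub i4) i5,
      intervalIntegral.integral_sub ((i1.sub i2).sub i3) i4,
      intervalIntegral.integral_sub (i1.sub i2) i3,
      intervalIntegral.integral_sub i1 i2,
      intervalIntegral.integral_const_mul, intervalIntegral.integral_const_mul,
      intervalIntegral.integral_const_mul, intervalIntegral.integral_const_mul,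
      intervalIntegral.integral_const_mul, intervalIntegral.integral_const_mul]
  unfold Jz
  ring

lemma keyval {r : ℝ} (hr1 : r < 1) (hr0 : 0 < r) (i j : ℕ) :
    (∫ y in (0:ℝ)..Real.pi,
      (Real.sin ((i:ℝ)*y) - r*Real.sin (((i:ℝ)+1)*y)) *
        (Real.sin ((j:ℝ)*y) - r*Real.sin (((j:ℝ)+1)*y)) / gm r y)
    = Real.pi/2 * ((if i = j then 1 else 0) - (1-r^2)*r^(i+j)) := by
  have hr2 : (1:ℝ) - r^2 ≠ 0 := by nlinarith
  rw [key hr1 hr0 i j]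
  rcases Nat.lt_trichotomy i j with h | rfl | h
  · obtain ⟨k, rfl⟩ : ∃ k, j = i + (k+1) := ⟨j - i - 1, by omega⟩
    have a1 : ((i + (k+1) : ℕ):ℝ) - (i:ℝ) = ((k+1:ℕ):ℝ) := by push_cast; ring
    have a2 : ((k+1:ℕ):ℝ) + 1 = ((k+2:ℕ):ℝ) := by push_cast; ring
    have a3 : ((k+1:ℕ):ℝ) - 1 = ((k:ℕ):ℝ) := by push_cast; ring
    have a4 : (i:ℝ) + ((i + (k+1) : ℕ):ℝ) = ((2*i+k+1:ℕ):ℝ) := by push_cast; ring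
    have a5 : ((2*i+k+1:ℕ):ℝ) + 1 = ((2*i+k+2:ℕ):ℝ) := by push_cast; ring
    have a6 : ((2*i+k+1:ℕ):ℝ) + 2 = ((2*i+k+3:ℕ):ℝ) := by push_cast; ring
    rw [a1, a2, a3, a4, a5, a6, Jnat hr1 hr0, Jnat hr1 hr0, Jnat hr1 hr0,
      Jnat hr1 hr0, Jnat hr1 hr0, Jnat hr1 hr0, if_neg (by omega)]
    field_simp
    ring
  · have a1 : (i:ℝ) - (i:ℝ) = ((0:ℕ):ℝ) := by push_cast; ring
    have a2 : ((0:ℕ):ℝ) + 1 = ((1:ℕ):ℝ) := by push_cast; ring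
    have a3 : ((0:ℕ):ℝ) - 1 = -((1:ℕ):ℝ) := by push_cast; ring
    have a4 : (i:ℝ) + (i:ℝ) = ((2*i:ℕ):ℝ) := by push_cast; ring
    have a5 : ((2*i:ℕ):ℝ) + 1 = ((2*i+1:ℕ):ℝ) := by push_cast; ring
    have a6 : ((2*i:ℕ):ℝ) + 2 = ((2*i+2:ℕ):ℝ) := by push_cast; ring
    rw [a1, a2, a3, a4, a5, a6, Jz_neg, Jnat hr1 hr0, Jnat hr1 hr0, Jnat hr1 hr0,
      Jnat hr1 hr0, Jnat hr1 hr0, if_pos rfl]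
    field_simp
    ring
  · obtain ⟨k, rfl⟩ : ∃ k, i = j + (k+1) := ⟨i - j - 1, by omega⟩
    have a1 : (j:ℝ) - ((j + (k+1) : ℕ):ℝ) = -((k+1:ℕ):ℝ) := by push_cast; ring
    have a2 : -((k+1:ℕ):ℝ) + 1 = -((k:ℕ):ℝ) := by push_cast; ring
    have a3 : -((k+1:ℕ):ℝ) - 1 = -((k+2:ℕ):ℝ) := by push_cast; ring
    have a4 : ((j + (k+1) : ℕ):ℝ) + (j:ℝ) = ((2*j+k+1:ℕ):ℝ) := by push_cast; ring
    have a5 : ((2*j+k+1:ℕ):ℝ) + 1 = ((2*j+k+2:ℕ):ℝ) := by push_cast; ring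
    have a6 : ((2*j+k+1:ℕ):ℝ) + 2 = ((2*j+k+3:ℕ):ℝ) := by push_cast; ring
    rw [a1, a2, a3, a4, a5, a6, Jz_neg, Jz_neg, Jz_neg, Jnat hr1 hr0, Jnat hr1 hr0,
      Jnat hr1 hr0, Jnat hr1 hr0, Jnat hr1 hr0, Jnat hr1 hr0, if_neg (by omega)]
    field_simp
    ring

/-- p_{ij}(0) = 1 if i = j and 0 otherwise. -/
theorem pq_at_zero (lam mu : ℝ) (hlam : 0 < lam) (hmu : 0 < mu)
    (hρ : lam / mu < 1) (i j : ℕ) :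
    pq lam mu i j 0 = if i = j then 1 else 0 := by
  set ρ := lam / mu with hρdef
  have hρ0 : 0 < ρ := div_pos hlam hmu
  set r := Real.sqrt ρ with hrdef
  have hr0 : 0 < r := Real.sqrt_pos.mpr hρ0
  have hr1 : r < 1 := by
    rw [hrdef, ← Real.sqrt_one]
    exact Real.sqrt_lt_sqrt hρ0.le hρ
  have hr2 : r^2 = ρ := Real.sq_sqrt hρ0.le
  have hgam : ∀ y, gam ρ y = gm r y := by
    intro y; unfold gam gm; rw [hr2, hrdef]
  have hπ : Real.pi ≠ 0 := Real.pi_ne_zero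
  have hint : (∫ y in (0:ℝ)..Real.pi,
      Real.exp (-(mu * 0 * gam ρ y)) / gam ρ y * (aco ρ i y * aco ρ j y))
      = ∫ y in (0:ℝ)..Real.pi,
      (Real.sin ((i:ℝ)*y) - r*Real.sin (((i:ℝ)+1)*y)) *
        (Real.sin ((j:ℝ)*y) - r*Real.sin (((j:ℝ)+1)*y)) / gm r y := by
    congr 1; funext y
    rw [mul_zero, zero_mul, neg_zero, Real.exp_zero, hgam]
    unfold aco
    rw [hrdef]
    ring
  unfold pq
  rw [hint, keyval hr1 hr0 i j]
  have hprod : ρ ^ (((j:ℝ)-(i:ℝ))/2) * r^(i+j) = ρ^j := by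
    have h1 : r^(i+j) = ρ ^ ((1/2 : ℝ) * ((i+j : ℕ):ℝ)) := by
      rw [hrdef, Real.sqrt_eq_rpow, ← Real.rpow_natCast (ρ ^ ((1:ℝ)/2)) (i+j),
        ← Real.rpow_mul hρ0.le]
    rw [h1, ← Real.rpow_add hρ0]
    have : ((j:ℝ)-(i:ℝ))/2 + (1/2 : ℝ) * ((i+j : ℕ):ℝ) = ((j:ℕ):ℝ) := by push_cast; ring
    rw [this, Real.rpow_natCast]
  by_cases h : i = j
  · subst h
    rw [← hρdef] at *
    have h0 : (((i:ℝ)-(i:ℝ))/2) = 0 := by ring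
    have hri : r^(i+i) = ρ^i := by
      rw [h0, Real.rpow_zero, one_mul] at hprod; exact hprod
    rw [h0, Real.rpow_zero, hr2, hri]
    field_simp
    ring
  · rw [← hρdef] at *
    rw [hr2]
    have : (2 / Real.pi) * ρ ^ (((j:ℝ)-(i:ℝ))/2) * (Real.pi/2 * ((0:ℝ) - (1-ρ)*r^(i+j)))
        = -((1-ρ) * ρ^j) := by
      rw [← hprod, zero_sub]
      field_simp
    simp only [if_neg h]
    rw [this]
    ring
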